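/- For the Gairing mechanism f*, the optimal set covering price of anarchy 1/(1 + (n-1)*f*(n)) converges to 1 - 1/e as n → ∞. -/

import Mathlib

open Filter Finset

/-- The Gairing optimal covering mechanism. -/
noncomputable def gairing (n j : ℕ) : ℝ :=
  (Nat.factorial (j - 1) : ℝ) *
    (1 / (((n - 1 : ℕ) : ℝ) * (Nat.factorial (n - 1) : ℝ)) +
      ∑ i ∈ Finset.Icc j (n - 1), (1 : ℝ) / (Nat.factorial i : ℝ)) /
    (1 / (((n - 1 : ℕ) : ℝ) * (Nat.factorial (n - 1) : ℝ)) +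
      ∑ i ∈ Finset.Icc 1 (n - 1), (1 : ℝ) / (Nat.factorial i : ℝ))

-- D n
noncomputable def Dfun (n : ℕ) : ℝ :=
  1 / (((n - 1 : ℕ) : ℝ) * (Nat.factorial (n - 1) : ℝ)) +
    ∑ i ∈ Finset.Icc 1 (n - 1), (1 : ℝ) / (Nat.factorial i : ℝ)

lemma sum_range_eq (n : ℕ) (hn : 1 ≤ n) :
    ∑ i ∈ Finset.range n, (1 : ℝ) / (Nat.factorial i : ℝ)
      = 1 + ∑ i ∈ Finset.Icc 1 (n - 1), (1 : ℝ) / (Nat.factorial i : ℝ) := by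
  have : Finset.range n = insert 0 (Finset.Icc 1 (n - 1)) := by
    ext x
    simp [Finset.mem_range, Finset.mem_Icc, Nat.lt_iff_le_pred hn]
    omega
  rw [this, Finset.sum_insert (by simp)]
  simp

lemma Dtendsto : Tendsto Dfun atTop (nhds (Real.exp 1 - 1)) := by
  have h1 : Tendsto (fun n : ℕ => ∑ i ∈ Finset.range n, (1:ℝ) / (Nat.factorial i : ℝ))
      atTop (nhds (Real.exp 1)) := by
    have := (NormedSpace.expSeries_div_hasSum_exp (1:ℝ)).tendsto_sum_nat
    simpa [Real.exp_eq_exp_ℝ, one_pow] using this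
  have h2 : Tendsto (fun n : ℕ => ∑ i ∈ Finset.Icc 1 (n-1), (1:ℝ) / (Nat.factorial i : ℝ))
      atTop (nhds (Real.exp 1 - 1)) := by
    have htail : Tendsto (fun n : ℕ => ∑ i ∈ Finset.range n, (1:ℝ) / (Nat.factorial i : ℝ) - 1)
        atTop (nhds (Real.exp 1 - 1)) := h1.sub_const 1
    refine htail.congr' ?_
    filter_upwards [eventually_ge_atTop 1] with n hn
    rw [sum_range_eq n hn]; ring
  have h3 : Tendsto (fun n : ℕ => 1 / (((n - 1 : ℕ) : ℝ) * (Nat.factorial (n - 1) : ℝ)))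
      atTop (nhds 0) := by
    have hat : Tendsto (fun n : ℕ => (n - 1) * Nat.factorial (n - 1)) atTop atTop :=
      Filter.tendsto_atTop_mono (fun n => Nat.le_mul_of_pos_right _ (Nat.factorial_pos _))
        (tendsto_sub_atTop_nat 1)
    have := (tendsto_one_div_atTop_nhds_zero_nat (𝕜 := ℝ)).comp hat
    refine this.congr fun n => ?_
    simp only [Function.comp_apply]
    push_cast
    ring
  have := h3.add h2
  rw [zero_add] at this
  exact this

theorem stmt_14 :
    Filter.Tendsto (fun n : ℕ => 1 / (1 + ((n : ℝ) - 1) * gairing n n))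
      Filter.atTop (nhds (1 - 1 / Real.exp 1)) := by
  have he : Real.exp 1 > 0 := Real.exp_pos 1
  have hlim : Tendsto (fun n : ℕ => Dfun n / (Dfun n + 1)) atTop
      (nhds ((Real.exp 1 - 1) / ((Real.exp 1 - 1) + 1))) :=
    Dtendsto.div (Dtendsto.add_const 1) (by linarith)
  have heq : (Real.exp 1 - 1) / ((Real.exp 1 - 1) + 1) = 1 - 1 / Real.exp 1 := by
    field_simp
    ring
  rw [heq] at hlim
  refine hlim.congr' ?_
  filter_upwards [eventually_ge_atTop 2] with n hn
  have hDpos : 0 < Dfun n := by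
    have h1 : (0:ℝ) < ((n - 1 : ℕ) : ℝ) * (Nat.factorial (n - 1) : ℝ) := by
      have : 0 < n - 1 := by omega
      positivity
    have h2 : (0:ℝ) ≤ ∑ i ∈ Finset.Icc 1 (n - 1), (1 : ℝ) / (Nat.factorial i : ℝ) := by
      positivity
    have := one_div_pos.mpr h1
    unfold Dfun; linarith
  have hc : ((n - 1 : ℕ) : ℝ) = (n : ℝ) - 1 := by
    have : 1 ≤ n := by omega
    push_cast [this]; ring
  have hcpos : (0:ℝ) < ((n - 1 : ℕ) : ℝ) := by
    have : 0 < n - 1 := by omega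
    exact_mod_cast this
  have hFpos : (0:ℝ) < (Nat.factorial (n - 1) : ℝ) := by positivity
  have hg : gairing n n = (1 / ((n - 1 : ℕ) : ℝ)) / Dfun n := by
    unfold gairing Dfun
    rw [Finset.Icc_eq_empty (by omega)]
    rw [Finset.sum_empty, add_zero]
    congr 1
    rw [one_div (((n - 1 : ℕ) : ℝ) * (Nat.factorial (n - 1) : ℝ)), mul_inv,
      mul_comm (((n - 1 : ℕ) : ℝ))⁻¹, ← mul_assoc, mul_inv_cancel₀ hFpos.ne', one_mul, one_div]
  rw [hg, ← hc]
  have hD := hDpos.ne'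
  have hD1 : Dfun n + 1 ≠ 0 := by linarith
  have h4 : ((n - 1 : ℕ) : ℝ) * (1 / ((n - 1 : ℕ) : ℝ) / Dfun n) = 1 / Dfun n := by
    rw [div_div, mul_one_div, ← div_div, div_self hcpos.ne']
  rw [h4]
  have h5 : (0:ℝ) < 1 + 1 / Dfun n := by
    have := one_div_pos.mpr hDpos; linarith
  rw [div_eq_div_iff hD1 h5.ne']
  rw [mul_add, mul_one_div, div_self hD, one_mul, mul_one, add_comm]
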